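/- Let V be a finite vertex set, and let the edge set of the complete graph on V be partitioned as O ∪ E ('odd' and 'even' edges). Let H be a set of edges such that: (1) E ⊆ H; (2) H contains a maximal forest T of the graph (V, O); (3) H ∩ E = E and H ∩ O ⊆ O; and (4) for every edge e = {u,v} of O, if there exists a cycle C through e in (V, (H ∩ O) ∪ {e}) such that no chord of C lies in O, then e ∈ H. Then H equals the full edge set of the complete graph on V. -/

import Mathlib

set_option linter.unusedSectionVars false

open SimpleGraph Walk in
private lemma stmt7_takeUntil_cons_ne {V : Type*} [DecidableEq V] {G : SimpleGraph V}
    {u x w y : V} (r : G.Adj u x) (p : G.Walk x w)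
    (hy : y ∈ (Walk.cons r p).support) (hne : u ≠ y) (hy' : y ∈ p.support) :
    (Walk.cons r p).takeUntil y hy = Walk.cons r (p.takeUntil y hy') := by
  simp only [Walk.takeUntil]; rw [dif_neg hne]

open SimpleGraph Walk in
private lemma stmt7_dropUntil_cons_ne {V : Type*} [DecidableEq V] {G : SimpleGraph V}
    {u x w y : V} (r : G.Adj u x) (p : G.Walk x w)
    (hy : y ∈ (Walk.cons r p).support) (hne : u ≠ y) (hy' : y ∈ p.support) :
    (Walk.cons r p).dropUntil y hy = p.dropUntil y hy' := by
  simp only [Walk.dropUntil]; rw [dif_neg hne]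

open SimpleGraph Walk in
private lemma stmt7_cycle_split {V : Type*} [DecidableEq V] {G : SimpleGraph V}
    {x y : V} (c : G.Walk x x) (hc : c.IsCycle) (hy : y ∈ c.support)
    (hxy : x ≠ y) :
    (c.takeUntil y hy).IsPath ∧ (c.dropUntil y hy).IsPath := by
  cases c with
  | nil => exact absurd rfl hc.ne_nil
  | cons r p =>
    rw [SimpleGraph.Walk.cons_isCycle_iff] at hc
    have hy' : y ∈ p.support := by
      have := hy
      rw [Walk.support_cons, List.mem_cons] at this
      rcases this with h | h
      · exact absurd h.symm hxy
      · exact h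
    rw [stmt7_takeUntil_cons_ne r p hy hxy hy', stmt7_dropUntil_cons_ne r p hy hxy hy']
    refine ⟨?_, hc.1.dropUntil hy'⟩
    rw [Walk.cons_isPath_iff]
    refine ⟨hc.1.takeUntil hy', ?_⟩
    intro hx
    have hspec := p.take_spec hy'
    have hnodup : p.support.Nodup := hc.1.support_nodup
    rw [← hspec, Walk.support_append] at hnodup
    have hdisj := (List.nodup_append'.mp hnodup).2.2
    have hxdrop : x ∈ (p.dropUntil y hy').support.tail := by
      have hx2 : x ∈ (p.dropUntil y hy').support := Walk.end_mem_support _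
      rw [Walk.support_eq_cons, List.mem_cons] at hx2
      rcases hx2 with h | h
      · exact absurd h hxy
      · exact h
    exact hdisj hx hxdrop

open SimpleGraph Walk in
private lemma stmt7_edge_mem_of_length_one {V : Type*} {G : SimpleGraph V} {u v : V}
    (p : G.Walk u v) (h : p.length = 1) : s(u,v) ∈ p.edges := by
  cases p with
  | nil => simp at h
  | cons r q =>
    cases q with
    | nil => simp
    | cons r' q' => simp [Walk.length_cons] at h

open SimpleGraph Walk in
private lemma stmt7_mem_support_tail_of_closed {V : Type*} {G : SimpleGraph V} {v y : V}
    (c : G.Walk v v) (hne : c ≠ Walk.nil) (hy : y ∈ c.support) : y ∈ c.support.tail := by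
  cases c with
  | nil => exact absurd rfl hne
  | cons r p =>
    rw [Walk.support_cons, List.tail_cons]
    rw [Walk.support_cons, List.mem_cons] at hy
    rcases hy with rfl | h
    · exact p.end_mem_support
    · exact h

open SimpleGraph Walk in
private lemma stmt7_key_induction {V : Type*} [DecidableEq V] (O H : Set (Sym2 V))
    (hchordless : ∀ e ∈ O,
        (∃ (v : V) (C : (SimpleGraph.fromEdgeSet ((H ∩ O) ∪ {e})).Walk v v),
          C.IsCycle ∧ e ∈ C.edges ∧
          ∀ x y : V, x ∈ C.support → y ∈ C.support → x ≠ y →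
            s(x, y) ∉ C.edges → s(x, y) ∉ O) →
        e ∈ H) :
    ∀ n : ℕ, ∀ e ∈ O, ∀ (v : V)
      (C : (SimpleGraph.fromEdgeSet ((H ∩ O) ∪ {e})).Walk v v),
      C.IsCycle → e ∈ C.edges → C.length ≤ n → e ∈ H := by
  intro n
  induction n using Nat.strong_induction_on with
  | _ n ih =>
  intro e he v C hC heC hlen
  by_cases hch : ∀ x y : V, x ∈ C.support → y ∈ C.support → x ≠ y →
      s(x, y) ∉ C.edges → s(x, y) ∉ O
  · exact hchordless e he ⟨v, C, hC, heC, hch⟩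
  push_neg at hch
  obtain ⟨x, y, hxs, hys, hxy, hfC, hfO⟩ := hch
  have hC' : (C.rotate x hxs).IsCycle := hC.rotate hxs
  set C' := C.rotate x hxs with hC'def
  have hedgesrot : C'.edges ~r C.edges := C.rotate_edges x hxs
  have hlen' : C'.length = C.length := by
    rw [← Walk.length_edges, ← Walk.length_edges]; exact hedgesrot.perm.length_eq
  have heC' : e ∈ C'.edges := hedgesrot.perm.mem_iff.mpr heC
  have hfC' : s(x, y) ∉ C'.edges := fun h => hfC (hedgesrot.perm.mem_iff.mp h)
  have hys' : y ∈ C'.support := by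
    have h1 : y ∈ C.support.tail := stmt7_mem_support_tail_of_closed C hC.ne_nil hys
    have h2 : C'.support.tail ~r C.support.tail := C.support_rotate x hxs
    have h3 : y ∈ C'.support.tail := h2.perm.mem_iff.mpr h1
    rw [Walk.support_eq_cons, List.mem_cons]; exact Or.inr h3
  obtain ⟨hq1, hq2⟩ := stmt7_cycle_split C' hC' hys' hxy
  set q1 := C'.takeUntil y hys' with hq1def
  set q2 := C'.dropUntil y hys' with hq2def
  have hspec : q1.append q2 = C' := C'.take_spec hys'
  have hedges : C'.edges = q1.edges ++ q2.edges := by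
    rw [← hspec, Walk.edges_append]
  have hlensum : q1.length + q2.length = C'.length := by
    rw [← hspec, Walk.length_append]
  have hnodup : (q1.edges ++ q2.edges).Nodup := by
    rw [← hedges]; exact hC'.isTrail.edges_nodup
  have hdisj := (List.nodup_append'.mp hnodup).2.2
  have hq1len : 2 ≤ q1.length := by
    rcases Nat.lt_or_ge q1.length 2 with h | h
    · interval_cases h' : q1.length
      · exact absurd (Walk.eq_of_length_eq_zero h') hxy
      · exact absurd (hedges ▸ List.mem_append_left _ (stmt7_edge_mem_of_length_one q1 h')) hfC'
    · exact h
  have hq2len : 2 ≤ q2.length := by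
    rcases Nat.lt_or_ge q2.length 2 with h | h
    · interval_cases h' : q2.length
      · exact absurd (Walk.eq_of_length_eq_zero h') (Ne.symm hxy)
      · refine absurd (hedges ▸ List.mem_append_right _ (stmt7_edge_mem_of_length_one q2 h')) ?_
        rw [Sym2.eq_swap]; exact hfC'
    · exact h
  have hn3 : 3 ≤ n := by omega
  have hCsub' : ∀ a ∈ C'.edges, a ∈ ((H ∩ O) ∪ {e} : Set (Sym2 V)) ∧ ¬a.IsDiag := by
    intro a ha
    have := C'.edges_subset_edgeSet ha
    rw [SimpleGraph.edgeSet_fromEdgeSet] at this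
    exact this
  have hef : e ≠ s(x, y) := fun h => hfC (h ▸ heC)
  rcases (hedges ▸ heC' : e ∈ q1.edges ++ q2.edges) |> List.mem_append.mp with he1 | he2
  · have he2 : e ∉ q2.edges := fun h => hdisj he1 h
    by_cases hfH : s(x, y) ∈ H
    · have hadj : (SimpleGraph.fromEdgeSet ((H ∩ O) ∪ {e})).Adj y x := by
        rw [SimpleGraph.fromEdgeSet_adj]
        exact ⟨by rw [Sym2.eq_swap]; exact Or.inl ⟨hfH, hfO⟩, Ne.symm hxy⟩
      have hcyc : (Walk.cons hadj q1).IsCycle := by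
        apply SimpleGraph.Path.cons_isCycle ⟨q1, hq1⟩
        rw [Sym2.eq_swap]
        exact fun h => hfC' (hedges ▸ List.mem_append_left _ h)
      exact ih (n - 1) (by omega) e he y (Walk.cons hadj q1) hcyc
        (by rw [Walk.edges_cons]; exact List.mem_cons_of_mem _ he1)
        (by rw [Walk.length_cons]; omega)
    · have hsub : ∀ a ∈ q2.edges,
          a ∈ (SimpleGraph.fromEdgeSet ((H ∩ O) ∪ {s(x, y)})).edgeSet := by
        intro a ha
        have haC : a ∈ C'.edges := hedges ▸ List.mem_append_right _ ha
        obtain ⟨hmem, hdiag⟩ := hCsub' a haC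
        rw [SimpleGraph.edgeSet_fromEdgeSet]
        refine ⟨?_, hdiag⟩
        rcases hmem with h | h
        · exact Or.inl h
        · exact absurd (h ▸ ha) he2
      have hadj : (SimpleGraph.fromEdgeSet ((H ∩ O) ∪ {s(x, y)})).Adj x y := by
        rw [SimpleGraph.fromEdgeSet_adj]
        exact ⟨Or.inr rfl, hxy⟩
      have hcyc : (Walk.cons hadj (q2.transfer _ hsub)).IsCycle := by
        apply SimpleGraph.Path.cons_isCycle ⟨q2.transfer _ hsub, hq2.transfer hsub⟩
        rw [Walk.edges_transfer]
        exact fun h => hfC' (hedges ▸ List.mem_append_right _ h)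
      exact absurd (ih (n - 1) (by omega) (s(x, y)) hfO x
        (Walk.cons hadj (q2.transfer _ hsub)) hcyc
        (by rw [Walk.edges_cons]; exact List.mem_cons_self)
        (by rw [Walk.length_cons, Walk.length_transfer]; omega)) hfH
  · have he1 : e ∉ q1.edges := fun h => hdisj h he2
    by_cases hfH : s(x, y) ∈ H
    · have hadj : (SimpleGraph.fromEdgeSet ((H ∩ O) ∪ {e})).Adj x y := by
        rw [SimpleGraph.fromEdgeSet_adj]
        exact ⟨Or.inl ⟨hfH, hfO⟩, hxy⟩
      have hcyc : (Walk.cons hadj q2).IsCycle := by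
        apply SimpleGraph.Path.cons_isCycle ⟨q2, hq2⟩
        exact fun h => hfC' (hedges ▸ List.mem_append_right _ h)
      exact ih (n - 1) (by omega) e he x (Walk.cons hadj q2) hcyc
        (by rw [Walk.edges_cons]; exact List.mem_cons_of_mem _ he2)
        (by rw [Walk.length_cons]; omega)
    · have hsub : ∀ a ∈ q1.edges,
          a ∈ (SimpleGraph.fromEdgeSet ((H ∩ O) ∪ {s(x, y)})).edgeSet := by
        intro a ha
        have haC : a ∈ C'.edges := hedges ▸ List.mem_append_left _ ha
        obtain ⟨hmem, hdiag⟩ := hCsub' a haC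
        rw [SimpleGraph.edgeSet_fromEdgeSet]
        refine ⟨?_, hdiag⟩
        rcases hmem with h | h
        · exact Or.inl h
        · exact absurd (h ▸ ha) he1
      have hadj : (SimpleGraph.fromEdgeSet ((H ∩ O) ∪ {s(x, y)})).Adj y x := by
        rw [SimpleGraph.fromEdgeSet_adj]
        exact ⟨by rw [Sym2.eq_swap]; exact Or.inr rfl, Ne.symm hxy⟩
      have hcyc : (Walk.cons hadj (q1.transfer _ hsub)).IsCycle := by
        apply SimpleGraph.Path.cons_isCycle ⟨q1.transfer _ hsub, hq1.transfer hsub⟩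
        rw [Walk.edges_transfer, Sym2.eq_swap]
        exact fun h => hfC' (hedges ▸ List.mem_append_left _ h)
      exact absurd (ih (n - 1) (by omega) (s(x, y)) hfO y
        (Walk.cons hadj (q1.transfer _ hsub)) hcyc
        (by rw [Walk.edges_cons, Sym2.eq_swap]; exact List.mem_cons_self)
        (by rw [Walk.length_cons, Walk.length_transfer]; omega)) hfH

open SimpleGraph Walk in
private lemma stmt7_reachable {V : Type*} [DecidableEq V] (O : Set (Sym2 V)) (T : SimpleGraph V)
    (hTO : T ≤ SimpleGraph.fromEdgeSet O)
    (hTmax : ∀ T' : SimpleGraph V, T ≤ T' → T' ≤ SimpleGraph.fromEdgeSet O →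
          T'.IsAcyclic → T' = T)
    (hTac : T.IsAcyclic)
    (u v : V) (huv : u ≠ v) (heO : s(u,v) ∈ O) (heT : s(u,v) ∉ T.edgeSet) :
    T.Reachable u v := by
  by_contra hr
  have hT'ac : (T ⊔ SimpleGraph.fromEdgeSet {s(u,v)}).IsAcyclic := by
    intro w p hp
    by_cases hep : s(u,v) ∈ p.edges
    · obtain ⟨hadj, hre⟩ :=
        SimpleGraph.adj_and_reachable_delete_edges_iff_exists_cycle.mpr ⟨w, p, hp, hep⟩
      have hgr : (T ⊔ SimpleGraph.fromEdgeSet {s(u,v)}) \ SimpleGraph.fromEdgeSet {s(u,v)} = T := by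
        ext a b
        simp only [SimpleGraph.sdiff_adj, SimpleGraph.sup_adj, SimpleGraph.fromEdgeSet_adj,
          Set.mem_singleton_iff]
        constructor
        · rintro ⟨h1 | h2, hn⟩
          · exact h1
          · exact absurd h2 hn
        · intro h
          refine ⟨Or.inl h, ?_⟩
          rintro ⟨hh, -⟩
          exact heT (hh ▸ (T.mem_edgeSet.mpr h))
      rw [SimpleGraph.deleteEdges, hgr] at hre
      exact hr hre
    · have hsub : ∀ a ∈ p.edges, a ∈ T.edgeSet := by
        intro a ha
        have h2 := p.edges_subset_edgeSet ha
        rw [SimpleGraph.edgeSet_sup, SimpleGraph.edgeSet_fromEdgeSet] at h2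
        rcases h2 with h | h
        · exact h
        · exact absurd (h.1 ▸ ha) hep
      exact hTac (p.transfer T hsub) (hp.transfer hsub)
  have hT'le : T ⊔ SimpleGraph.fromEdgeSet {s(u,v)} ≤ SimpleGraph.fromEdgeSet O := by
    refine sup_le hTO (SimpleGraph.fromEdgeSet_mono ?_)
    simpa using heO
  have heq := hTmax _ le_sup_left hT'le hT'ac
  have hadj : (T ⊔ SimpleGraph.fromEdgeSet {s(u,v)}).Adj u v := by
    right
    rw [SimpleGraph.fromEdgeSet_adj]
    exact ⟨rfl, huv⟩
  rw [heq] at hadj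
  exact hr hadj.reachable

theorem stmt_7 {V : Type*} [Fintype V] [DecidableEq V]
    (O E H : Set (Sym2 V))
    -- O ∪ E partitions the edge set of the complete graph on V
    (hpart : O ∪ E = {e : Sym2 V | ¬ e.IsDiag}) (hdisj : O ∩ E = ∅)
    -- (1) E ⊆ H and (3) H consists of odd and even edges
    (hEH : E ⊆ H) (hHOE : H ⊆ O ∪ E)
    -- (2) H contains a maximal forest T of the graph (V, O)
    (hforest : ∃ T : SimpleGraph V, T ≤ SimpleGraph.fromEdgeSet O ∧ T.IsAcyclic ∧
        (∀ T' : SimpleGraph V, T ≤ T' → T' ≤ SimpleGraph.fromEdgeSet O →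
          T'.IsAcyclic → T' = T) ∧ T.edgeSet ⊆ H)
    -- (4) chordless-cycle condition
    (hchordless : ∀ e ∈ O,
        (∃ (v : V) (C : (SimpleGraph.fromEdgeSet ((H ∩ O) ∪ {e})).Walk v v),
          C.IsCycle ∧ e ∈ C.edges ∧
          ∀ x y : V, x ∈ C.support → y ∈ C.support → x ≠ y →
            s(x, y) ∉ C.edges → s(x, y) ∉ O) →
        e ∈ H) :
    H = O ∪ E := by
  obtain ⟨T, hTO, hTac, hTmax, hTH⟩ := hforest
  refine Set.eq_of_subset_of_subset hHOE ?_
  intro e he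
  rcases he with heO | heE
  swap
  · exact hEH heE
  -- the odd case
  revert heO
  induction e using Sym2.ind with
  | _ u v =>
  intro heO
  have huv : u ≠ v := by
    have h1 : s(u, v) ∈ O ∪ E := Or.inl heO
    rw [hpart] at h1
    simpa [Sym2.mk_isDiag_iff] using h1
  by_cases heT : s(u, v) ∈ T.edgeSet
  · exact hTH heT
  have hreach : T.Reachable u v := stmt7_reachable O T hTO hTmax hTac u v huv heO heT
  obtain ⟨w⟩ := hreach
  set p : T.Path u v := w.toPath with hpdef
  have hTsub : T.edgeSet ⊆ (H ∩ O : Set (Sym2 V)) := by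
    intro a ha
    have h3 := SimpleGraph.edgeSet_subset_edgeSet.mpr hTO ha
    rw [SimpleGraph.edgeSet_fromEdgeSet] at h3
    exact ⟨hTH ha, h3.1⟩
  have hsub : ∀ a ∈ (p : T.Walk u v).edges,
      a ∈ (SimpleGraph.fromEdgeSet ((H ∩ O) ∪ {s(u, v)})).edgeSet := by
    intro a ha
    have haT : a ∈ T.edgeSet := (p : T.Walk u v).edges_subset_edgeSet ha
    rw [SimpleGraph.edgeSet_fromEdgeSet]
    exact ⟨Or.inl (hTsub haT), T.not_isDiag_of_mem_edgeSet haT⟩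
  set p' := (p : T.Walk u v).transfer _ hsub with hp'def
  have hadj : (SimpleGraph.fromEdgeSet ((H ∩ O) ∪ {s(u, v)})).Adj v u := by
    rw [SimpleGraph.fromEdgeSet_adj]
    exact ⟨by rw [Sym2.eq_swap]; exact Or.inr rfl, Ne.symm huv⟩
  have hnotin : s(v, u) ∉ p'.edges := by
    rw [hp'def, SimpleGraph.Walk.edges_transfer, Sym2.eq_swap]
    intro h
    exact heT ((p : T.Walk u v).edges_subset_edgeSet h)
  have hcyc : (SimpleGraph.Walk.cons hadj p').IsCycle :=
    SimpleGraph.Path.cons_isCycle ⟨p', p.2.transfer hsub⟩ hadj hnotin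
  exact stmt7_key_induction O H hchordless (SimpleGraph.Walk.cons hadj p').length (s(u, v)) heO v
    (SimpleGraph.Walk.cons hadj p') hcyc
    (by rw [SimpleGraph.Walk.edges_cons, Sym2.eq_swap]; exact List.mem_cons_self)
    le_rfl
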